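/- For every integer n ≥ 1, the number of big Schröder paths of length 2n is exactly twice the number of little Schröder paths of length 2n. -/

import Mathlib

/-- A step of a Schröder path: upstep, downstep, or a *double* horizontal step. -/
inductive SchStep : Type
  | up : SchStep
  | down : SchStep
  | horiz : SchStep
deriving DecidableEq

/-- The number of unit steps a step occupies: `horiz` is a double horizontal step. -/
def SchStep.len : SchStep → ℕ
  | .up => 1
  | .down => 1
  | .horiz => 2

/-- The change in height produced by a step. -/
def SchStep.rise : SchStep → ℤ
  | .up => 1
  | .down => -1
  | .horiz => 0

/-- The length of a path (a double horizontal step counts 2). -/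
def pathLen (p : List SchStep) : ℕ := (p.map SchStep.len).sum

/-- The final height of a path started at height 0. -/
def pathHeight (p : List SchStep) : ℤ := (p.map SchStep.rise).sum

/-- A big Schröder path: ends at height 0 and never goes below the x-axis. -/
def IsBigSchroeder (p : List SchStep) : Prop :=
  pathHeight p = 0 ∧ ∀ q : List SchStep, q <+: p → 0 ≤ pathHeight q

/-- A little Schröder path: a big Schröder path with no double horizontal step at
height 0. -/
def IsLittleSchroeder (p : List SchStep) : Prop :=
  IsBigSchroeder p ∧ ∀ q r : List SchStep, p = q ++ SchStep.horiz :: r → pathHeight q ≠ 0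

namespace SchAux

@[simp] lemma pathHeight_nil : pathHeight [] = 0 := rfl
@[simp] lemma pathHeight_cons (s : SchStep) (t : List SchStep) :
    pathHeight (s :: t) = s.rise + pathHeight t := by simp [pathHeight]
@[simp] lemma pathHeight_append (a b : List SchStep) :
    pathHeight (a ++ b) = pathHeight a + pathHeight b := by simp [pathHeight]

@[simp] lemma pathLen_nil : pathLen [] = 0 := rfl
@[simp] lemma pathLen_cons (s : SchStep) (t : List SchStep) :
    pathLen (s :: t) = s.len + pathLen t := by simp [pathLen]
@[simp] lemma pathLen_append (a b : List SchStep) :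
    pathLen (a ++ b) = pathLen a + pathLen b := by simp [pathLen]

lemma rise_neg_one (s : SchStep) (h : s.rise < 0) : s = .down := by
  cases s <;> simp_all [SchStep.rise]

lemma rise_ge (s : SchStep) : -1 ≤ s.rise := by cases s <;> simp [SchStep.rise]

/-- running heights (starting at offset `h`) stay nonnegative -/
def NN : ℤ → List SchStep → Prop
  | _, [] => True
  | h, s :: t => 0 ≤ h + s.rise ∧ NN (h + s.rise) t

/-- no horizontal step at running height `0` (starting at offset `h`) -/
def NF : ℤ → List SchStep → Prop
  | _, [] => True
  | h, s :: t => (s = .horiz → h ≠ 0) ∧ NF (h + s.rise) t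

instance NN.dec : ∀ (h : ℤ) (p : List SchStep), Decidable (NN h p)
  | _, [] => .isTrue trivial
  | h, s :: t => have := NN.dec (h + s.rise) t; by unfold NN; infer_instance

instance NF.dec : ∀ (h : ℤ) (p : List SchStep), Decidable (NF h p)
  | _, [] => .isTrue trivial
  | h, s :: t => have := NF.dec (h + s.rise) t; by unfold NF; infer_instance

@[simp] lemma NN_nil (h : ℤ) : NN h [] := trivial
@[simp] lemma NN_cons (h : ℤ) (s : SchStep) (t : List SchStep) :
    NN h (s :: t) ↔ 0 ≤ h + s.rise ∧ NN (h + s.rise) t := Iff.rfl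
@[simp] lemma NF_nil (h : ℤ) : NF h [] := trivial
@[simp] lemma NF_cons (h : ℤ) (s : SchStep) (t : List SchStep) :
    NF h (s :: t) ↔ (s = .horiz → h ≠ 0) ∧ NF (h + s.rise) t := Iff.rfl

lemma NN_append (h : ℤ) (a b : List SchStep) :
    NN h (a ++ b) ↔ NN h a ∧ NN (h + pathHeight a) b := by
  induction a generalizing h with
  | nil => simp
  | cons s t ih => simp [ih, and_assoc, add_assoc]

lemma NF_append (h : ℤ) (a b : List SchStep) :
    NF h (a ++ b) ↔ NF h a ∧ NF (h + pathHeight a) b := by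
  induction a generalizing h with
  | nil => simp
  | cons s t ih => simp [ih, and_assoc, add_assoc]

lemma NN_mono {h h' : ℤ} (hh : h ≤ h') {p : List SchStep} (hp : NN h p) : NN h' p := by
  induction p generalizing h h' with
  | nil => trivial
  | cons s t ih =>
    exact ⟨le_trans hp.1 (by linarith), ih (by linarith) hp.2⟩

lemma NN_last {h : ℤ} (h0 : 0 ≤ h) {p : List SchStep} (hp : NN h p) :
    0 ≤ h + pathHeight p := by
  induction p generalizing h with
  | nil => simpa
  | cons s t ih =>
    have := ih hp.1 hp.2
    simpa [add_assoc] using this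

lemma NF_of_NN {h : ℤ} {p : List SchStep} (hp : NN h p) : NF (h + 1) p := by
  induction p generalizing h with
  | nil => trivial
  | cons s t ih =>
    refine ⟨fun hs => ?_, by simpa [add_right_comm] using ih hp.2⟩
    have : 0 ≤ h + s.rise := hp.1
    subst hs
    simp [SchStep.rise] at this ⊢
    omega

lemma nn_iff (h : ℤ) (p : List SchStep) :
    (∀ q, q <+: p → 0 ≤ h + pathHeight q) ↔ (0 ≤ h ∧ NN h p) := by
  induction p generalizing h with
  | nil =>
    constructor
    · intro H; exact ⟨by simpa using H [] List.nil_prefix, trivial⟩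
    · rintro ⟨h0, -⟩ q hq
      simp [List.prefix_nil.mp hq, h0]
  | cons s t ih =>
    constructor
    · intro H
      refine ⟨by simpa using H [] List.nil_prefix, ?_, ?_⟩
      · simpa using H [s] ⟨t, rfl⟩
      · refine ((ih (h + s.rise)).mp ?_).2
        intro q hq
        have := H (s :: q) (List.cons_prefix_cons.mpr ⟨rfl, hq⟩)
        simpa [add_assoc] using this
    · rintro ⟨h0, h1, h2⟩ q hq
      rcases q with _ | ⟨x, q⟩
      · simpa using h0
      · rw [List.cons_prefix_cons] at hq
        obtain ⟨rfl, hq⟩ := hq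
        have := ((ih (h + x.rise)).mpr ⟨h1, h2⟩) q hq
        simpa [add_assoc] using this

lemma nf_iff (h : ℤ) (p : List SchStep) :
    NF h p ↔ ∀ q r : List SchStep, p = q ++ SchStep.horiz :: r → h + pathHeight q ≠ 0 := by
  induction p generalizing h with
  | nil =>
    simp only [NF_nil, true_iff]
    intro q r hqr
    exact absurd hqr (by simp)
  | cons s t ih =>
    constructor
    · rintro ⟨h1, h2⟩ q r hqr
      rcases q with _ | ⟨x, q⟩
      · simp only [List.nil_append] at hqr
        injection hqr with hx ht
        subst hx; subst ht
        simpa using h1 rfl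
      · simp only [List.cons_append] at hqr
        injection hqr with hx ht
        subst hx; subst ht
        have := (ih (h + s.rise)).mp h2 q r rfl
        simpa [add_assoc] using this
    · intro H
      refine ⟨fun hs => by simpa using H [] t (by rw [hs]; rfl), ?_⟩
      refine (ih (h + s.rise)).mpr ?_
      intro q r hqr
      have := H (s :: q) r (by simp [hqr])
      simpa [add_assoc] using this

/-- `BigP`: reformulation of `IsBigSchroeder`. -/
def BigP (p : List SchStep) : Prop := pathHeight p = 0 ∧ NN 0 p

/-- `LittleP`: reformulation of `IsLittleSchroeder`. -/
def LittleP (p : List SchStep) : Prop := BigP p ∧ NF 0 p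

lemma big_iff (p : List SchStep) : IsBigSchroeder p ↔ BigP p := by
  unfold IsBigSchroeder BigP
  have := nn_iff 0 p
  simp only [zero_add] at this
  rw [this]
  simp

lemma little_iff (p : List SchStep) : IsLittleSchroeder p ↔ LittleP p := by
  unfold IsLittleSchroeder LittleP
  rw [big_iff]
  have := nf_iff 0 p
  simp only [zero_add] at this
  rw [this]

/-- split at the first step that takes the running height (starting at `h`) below 0;
that step is removed. -/
def fr (h : ℤ) : List SchStep → List SchStep × List SchStep
  | [] => ([], [])
  | s :: t =>
    if h + s.rise < 0 then ([], t)
    else ((fr (h + s.rise) t).1.cons s, (fr (h + s.rise) t).2)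

lemma fr_spec (h : ℤ) (p : List SchStep) (h0 : 0 ≤ h) (hp : ¬ NN h p) :
    p = (fr h p).1 ++ .down :: (fr h p).2 ∧ h + pathHeight (fr h p).1 = 0 ∧
      NN h (fr h p).1 := by
  induction p generalizing h with
  | nil => exact absurd trivial hp
  | cons s t ih =>
    by_cases hc : h + s.rise < 0
    · have hr : s.rise < 0 := by linarith
      have : s = .down := rise_neg_one s hr
      subst this
      have hh : h = 0 := by
        simp [SchStep.rise] at hc
        omega
      subst hh
      simp only [fr, if_pos hc]
      refine ⟨by simp, by simp, by simp⟩
    · push_neg at hc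
      have hnt : ¬ NN (h + s.rise) t := by
        intro hnn; exact hp ⟨hc, hnn⟩
      obtain ⟨e1, e2, e3⟩ := ih (h + s.rise) hc hnt
      refine ⟨?_, ?_, ?_⟩
      · simp only [fr, if_neg (not_lt.mpr hc)]
        simpa using congrArg (List.cons s) e1
      · simp only [fr, if_neg (not_lt.mpr hc)]
        simp only [pathHeight_cons] at e2 ⊢
        linarith [e2]
      · simp only [fr, if_neg (not_lt.mpr hc)]
        exact ⟨hc, e3⟩

lemma fr_of (h : ℤ) (A B : List SchStep) (hA : NN h A) (hh : h + pathHeight A = 0) :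
    fr h (A ++ .down :: B) = (A, B) := by
  induction A generalizing h with
  | nil =>
    have : h = 0 := by simpa using hh
    subst this
    simp [fr, SchStep.rise]
  | cons s t ih =>
    have h1 : 0 ≤ h + s.rise := hA.1
    have := ih (h + s.rise) hA.2 (by simp at hh ⊢; linarith)
    simp [fr, not_lt.mpr h1, this]

/-- split at the last horizontal step at running height 0 (starting at `h`);
the horizontal step is removed. -/
def sl (h : ℤ) : List SchStep → List SchStep × List SchStep
  | [] => ([], [])
  | s :: t =>
    if NF (h + s.rise) t then ([], t)
    else ((sl (h + s.rise) t).1.cons s, (sl (h + s.rise) t).2)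

lemma sl_spec (h : ℤ) (p : List SchStep) (hp : ¬ NF h p) :
    p = (sl h p).1 ++ .horiz :: (sl h p).2 ∧ h + pathHeight (sl h p).1 = 0 ∧
      NF 0 (sl h p).2 := by
  induction p generalizing h with
  | nil => exact absurd trivial hp
  | cons s t ih =>
    by_cases hc : NF (h + s.rise) t
    · -- then the failure is at the head: s = horiz and h = 0
      have h1 : ¬ (s = .horiz → h ≠ 0) := fun hi => hp ⟨hi, hc⟩
      push_neg at h1
      obtain ⟨hs, hh⟩ := h1
      subst hs
      subst hh
      simp only [sl, if_pos hc]
      exact ⟨by simp, by simp, by simpa [SchStep.rise] using hc⟩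
    · obtain ⟨e1, e2, e3⟩ := ih (h + s.rise) hc
      refine ⟨?_, ?_, ?_⟩
      · simp only [sl, if_neg hc]
        simpa using congrArg (List.cons s) e1
      · simp only [sl, if_neg hc]
        simp only [pathHeight_cons] at e2 ⊢
        linarith [e2]
      · simp only [sl, if_neg hc]
        exact e3

lemma sl_of (h : ℤ) (A B : List SchStep) (hh : h + pathHeight A = 0) (hB : NF 0 B) :
    sl h (A ++ .horiz :: B) = (A, B) := by
  induction A generalizing h with
  | nil =>
    have : h = 0 := by simpa using hh
    subst this
    simp [sl, SchStep.rise, hB]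
  | cons s t ih =>
    have hc : ¬ NF (h + s.rise) (t ++ SchStep.horiz :: B) := by
      rw [NF_append]
      rintro ⟨-, h2⟩
      have : h + s.rise + pathHeight t = 0 := by simp at hh; linarith
      rw [this] at h2
      exact h2.1 rfl rfl
    have := ih (h + s.rise) (by simp at hh ⊢; linarith)
    simp [sl, hc, this]

/-- From a big path with a horizontal step at height 0, produce a little path. -/
def toLittle (p : List SchStep) : List SchStep :=
  .up :: (sl 0 p).1 ++ .down :: (sl 0 p).2

/-- From a (nonempty) little path, produce a big path with a horizontal step at height 0. -/
def toBig (p : List SchStep) : List SchStep :=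
  (fr 0 p.tail).1 ++ .horiz :: (fr 0 p.tail).2

lemma prop1 (p : List SchStep) (hb : BigP p) (hf : ¬ NF 0 p) :
    LittleP (toLittle p) ∧ pathLen (toLittle p) = pathLen p ∧ toBig (toLittle p) = p := by
  obtain ⟨e1, e2, e3⟩ := sl_spec 0 p hf
  set A := (sl 0 p).1 with hA
  set B := (sl 0 p).2 with hB
  have hA0 : pathHeight A = 0 := by simpa using e2
  have hB0 : pathHeight B = 0 := by
    have := hb.1
    rw [e1] at this
    simp [hA0, SchStep.rise] at this
    exact this
  have hNN : NN 0 A ∧ NN 0 B := by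
    have := hb.2
    rw [e1, NN_append] at this
    simpa [hA0, SchStep.rise] using this
  have hform : toLittle p = (SchStep.up :: A) ++ SchStep.down :: B := rfl
  have hlit : LittleP (toLittle p) := by
    refine ⟨⟨?_, ?_⟩, ?_⟩
    · rw [hform]; simp [SchStep.rise, hA0, hB0]
    · rw [hform, NN_append]
      refine ⟨⟨by norm_num [SchStep.rise], NN_mono (by norm_num [SchStep.rise]) hNN.1⟩, ?_, ?_⟩
      · simp [SchStep.rise, hA0]
      · rw [show (0:ℤ) + pathHeight (SchStep.up :: A) + SchStep.down.rise = 0 from by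
            simp [SchStep.rise, hA0]]
        exact hNN.2
    · rw [hform, NF_append]
      refine ⟨⟨by simp, ?_⟩, by simp, ?_⟩
      · rw [show (0:ℤ) + SchStep.up.rise = 0 + 1 from by norm_num [SchStep.rise]]
        exact NF_of_NN hNN.1
      · rw [show (0:ℤ) + pathHeight (SchStep.up :: A) + SchStep.down.rise = 0 from by
            simp [SchStep.rise, hA0]]
        exact e3
  refine ⟨hlit, ?_, ?_⟩
  · rw [hform, e1]
    simp only [pathLen_append, pathLen_cons, SchStep.len]
    omega
  · have : (toLittle p).tail = A ++ .down :: B := by simp [toLittle, hA, hB]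
    rw [toBig, this, fr_of 0 A B hNN.1 (by simpa using hA0)]
    exact e1.symm

lemma little_head (p : List SchStep) (hl : LittleP p) (hne : p ≠ []) :
    ∃ t, p = .up :: t := by
  rcases p with _ | ⟨s, t⟩
  · exact absurd rfl hne
  · refine ⟨t, ?_⟩
    have h1 : 0 ≤ (0:ℤ) + s.rise := hl.1.2.1
    have h2 : s = .horiz → (0:ℤ) ≠ 0 := hl.2.1
    cases s
    · rfl
    · simp [SchStep.rise] at h1
    · simp at h2

lemma prop2 (p : List SchStep) (hl : LittleP p) (hne : p ≠ []) :
    BigP (toBig p) ∧ ¬ NF 0 (toBig p) ∧ pathLen (toBig p) = pathLen p ∧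
      toLittle (toBig p) = p := by
  obtain ⟨t, rfl⟩ := little_head p hl hne
  have ht : pathHeight t = -1 := by
    have := hl.1.1
    simp [SchStep.rise] at this
    linarith
  have hNN1 : NN 1 t := by simpa [SchStep.rise] using hl.1.2.2
  have hnn : ¬ NN 0 t := fun h => by
    have := NN_last le_rfl h
    rw [ht] at this; norm_num at this
  obtain ⟨e1, e2, e3⟩ := fr_spec 0 t le_rfl hnn
  have htail : (SchStep.up :: t).tail = t := rfl
  set A := (fr 0 t).1 with hA
  set B := (fr 0 t).2 with hB
  have hA0 : pathHeight A = 0 := by simpa using e2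
  have hB0 : pathHeight B = 0 := by
    rw [e1] at ht
    simp [hA0, SchStep.rise] at ht
    linarith
  have hNNB : NN 0 B := by
    have := hNN1
    rw [e1, NN_append] at this
    simpa [hA0, SchStep.rise] using this.2.2
  have hNF : NF 1 A ∧ NF 0 B := by
    have := hl.2
    simp only [NF_cons] at this
    have := this.2
    rw [e1, NF_append] at this
    simpa [SchStep.rise, hA0] using this
  have hbig : BigP (toBig (SchStep.up :: t)) := by
    constructor
    · simp [toBig, htail, ← hA, ← hB, hA0, hB0, SchStep.rise]
    · simp only [toBig, htail, ← hA, ← hB, NN_append, NN_cons]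
      exact ⟨e3, by simp [hA0, SchStep.rise], by simpa [hA0, SchStep.rise] using hNNB⟩
  refine ⟨hbig, ?_, ?_, ?_⟩
  · simp only [toBig, htail, ← hA, ← hB, NF_append]
    rintro ⟨-, h2⟩
    exact h2.1 rfl (by simp [hA0])
  · rw [toBig, htail, ← hA, ← hB]
    conv_rhs => rw [show t = A ++ .down :: B from e1]
    simp [SchStep.len]
    omega
  · rw [toBig, htail, ← hA, ← hB, toLittle, sl_of 0 A B (by simpa using hA0) hNF.2]
    rw [show t = A ++ .down :: B from e1]
    simp

lemma length_le_pathLen (p : List SchStep) : p.length ≤ pathLen p := by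
  induction p with
  | nil => simp
  | cons s t ih =>
    have : 1 ≤ s.len := by cases s <;> simp [SchStep.len]
    simp only [List.length_cons, pathLen_cons]
    omega

instance fintypeSchStep : Fintype SchStep :=
  ⟨{.up, .down, .horiz}, by intro x; cases x <;> simp⟩

lemma finite_sub (P : List SchStep → Prop) (m : ℕ) :
    Finite {p : List SchStep // P p ∧ pathLen p = m} := by
  have : Finite {l : List SchStep // l.length ≤ m} := by
    refine Finite.of_injective (fun l => (fun i : Fin (m+1) => l.1[(i : ℕ)]?)) ?_
    intro a b hab
    apply Subtype.ext
    apply List.ext_getElem?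
    intro i
    by_cases hi : i < m + 1
    · exact congrFun hab ⟨i, hi⟩
    · push_neg at hi
      rw [List.getElem?_eq_none_iff.mpr, List.getElem?_eq_none_iff.mpr] <;> omega
  refine Finite.of_injective
    (fun p => (⟨p.1, le_of_le_of_eq (length_le_pathLen p.1) p.2.2⟩ :
      {l : List SchStep // l.length ≤ m})) ?_
  intro a b hab
  have h := congrArg Subtype.val hab
  exact Subtype.ext h

/-- The key equivalence. -/
noncomputable def mainEquiv (n : ℕ) (hn : 1 ≤ n) :
    {p : List SchStep // BigP p ∧ pathLen p = 2 * n} ≃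
      {p : List SchStep // LittleP p ∧ pathLen p = 2 * n} ⊕
        {p : List SchStep // LittleP p ∧ pathLen p = 2 * n} where
  toFun x :=
    if h : NF 0 x.1 then .inl ⟨x.1, ⟨x.2.1, h⟩, x.2.2⟩
    else .inr ⟨toLittle x.1, (prop1 x.1 x.2.1 h).1, by
      rw [(prop1 x.1 x.2.1 h).2.1]; exact x.2.2⟩
  invFun y :=
    match y with
    | .inl z => ⟨z.1, z.2.1.1, z.2.2⟩
    | .inr z =>
      have hne : z.1 ≠ [] := by
        intro h
        have := z.2.2
        rw [h] at this
        simp at this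
        omega
      ⟨toBig z.1, (prop2 z.1 z.2.1 hne).1, by
        rw [(prop2 z.1 z.2.1 hne).2.2.1]; exact z.2.2⟩
  left_inv x := by
    by_cases h : NF 0 x.1
    · simp [h]
    · simp only [h, dif_neg, not_false_iff]
      apply Subtype.ext
      exact (prop1 x.1 x.2.1 h).2.2
  right_inv y := by
    rcases y with z | z
    · simp [z.2.1.2]
    · have hne : z.1 ≠ [] := by
        intro h
        have := z.2.2
        rw [h] at this
        simp at this
        omega
      have h2 := prop2 z.1 z.2.1 hne
      simp only [dif_neg h2.2.1]
      congr 1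
      apply Subtype.ext
      exact h2.2.2.2

end SchAux

/-- For `n ≥ 1`, there are twice as many big Schröder paths of length `2n` as little
Schröder paths of length `2n`. -/
theorem big_eq_two_mul_little (n : ℕ) (hn : 1 ≤ n) :
    Nat.card {p : List SchStep // IsBigSchroeder p ∧ pathLen p = 2 * n} =
      2 * Nat.card {p : List SchStep // IsLittleSchroeder p ∧ pathLen p = 2 * n} := by
  classical
  have e1 : {p : List SchStep // IsBigSchroeder p ∧ pathLen p = 2 * n} ≃
      {p : List SchStep // SchAux.BigP p ∧ pathLen p = 2 * n} :=
    Equiv.subtypeEquivRight (fun p => by rw [SchAux.big_iff])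
  have e2 : {p : List SchStep // IsLittleSchroeder p ∧ pathLen p = 2 * n} ≃
      {p : List SchStep // SchAux.LittleP p ∧ pathLen p = 2 * n} :=
    Equiv.subtypeEquivRight (fun p => by rw [SchAux.little_iff])
  have := SchAux.finite_sub SchAux.LittleP (2 * n)
  have := SchAux.finite_sub SchAux.BigP (2 * n)
  rw [Nat.card_congr (e1.trans (SchAux.mainEquiv n hn)), Nat.card_sum,
    Nat.card_congr e2]
  omega
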